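/- Let h be an arithmetical function and set f(i,j) = h(i) − h(gcd(i,j)). Then [f(i,j)]_{n×n} = C · diag((μ*h)(1),…,(μ*h)(n)) · Dᵀ, where μ*h denotes Dirichlet convolution with the Möbius function, C is the divisibility matrix, and D its complement. -/

import Mathlib

open Finset Matrix ArithmeticFunction
open scoped ArithmeticFunction.Moebius

private lemma moeb_sum (h : ℕ → ℂ) :
    ∀ m > 0, ∑ d ∈ m.divisors,
      (∑ e ∈ d.divisors, (μ e : ℂ) * h (d / e)) = h m := by
  rw [ArithmeticFunction.sum_eq_iff_sum_mul_moebius_eq]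
  intro m _
  rw [Nat.sum_divisorsAntidiagonal (fun a b => (μ a : ℂ) * h b)]

theorem gcd_matrix_moebius_inversion (n : ℕ) (h : ℕ → ℂ) :
    (Matrix.of fun i j : Fin n =>
        h (i.1 + 1) - h (Nat.gcd (i.1 + 1) (j.1 + 1))) =
      (Matrix.of fun i j : Fin n => if (j.1 + 1) ∣ (i.1 + 1) then (1 : ℂ) else 0) *
        Matrix.diagonal (fun k : Fin n =>
          ∑ d ∈ (k.1 + 1).divisors, (μ d : ℂ) * h ((k.1 + 1) / d)) *
        (Matrix.of fun i j : Fin n => if ¬ (j.1 + 1) ∣ (i.1 + 1) then (1 : ℂ) else 0)ᵀ := by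
  ext i j
  set G : ℕ → ℂ := fun m => ∑ d ∈ m.divisors, (μ d : ℂ) * h (m / d) with hG
  rw [Matrix.mul_assoc, Matrix.mul_apply]
  simp only [Matrix.transpose_apply, Matrix.of_apply, Matrix.mul_apply,
    Matrix.diagonal_apply, ite_mul, zero_mul, Finset.sum_ite_eq, Finset.mem_univ, if_true]
  have key : ∀ k : Fin n,
      (if (k.1 + 1) ∣ (i.1 + 1) then
        (1:ℂ) * (G (k.1+1) * (if ¬ (k.1 + 1) ∣ (j.1 + 1) then (1:ℂ) else 0)) else 0) =
      (if (k.1 + 1) ∣ (i.1 + 1) then G (k.1+1) else 0)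
        - (if (k.1 + 1) ∣ Nat.gcd (i.1+1) (j.1+1) then G (k.1+1) else 0) := by
    intro k
    by_cases h1 : (k.1 + 1) ∣ (i.1 + 1) <;> by_cases h2 : (k.1 + 1) ∣ (j.1 + 1) <;>
      simp [h1, h2, Nat.dvd_gcd_iff]
  rw [Finset.sum_congr rfl fun k _ => key k, Finset.sum_sub_distrib]
  have sum_div : ∀ m : ℕ, 0 < m → m ≤ n →
      (∑ k : Fin n, (if (k.1 + 1) ∣ m then G (k.1+1) else 0)) = h m := by
    intro m hm hmn
    rw [Fin.sum_univ_eq_sum_range (fun k => (if (k + 1) ∣ m then G (k+1) else 0)),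
      ← Finset.sum_filter, ← moeb_sum h m hm, ← hG]
    apply Finset.sum_nbij' (fun k => k + 1) (fun d => d - 1)
    · intro a ha
      simp only [Finset.mem_filter, Finset.mem_range] at ha
      exact Nat.mem_divisors.2 ⟨ha.2, hm.ne'⟩
    · intro d hd
      have h1 : 1 ≤ d := (Nat.one_le_iff_ne_zero.2 (Nat.pos_of_mem_divisors hd).ne')
      simp only [Finset.mem_filter, Finset.mem_range, Nat.sub_add_cancel h1]
      exact ⟨lt_of_lt_of_le (Nat.lt_of_lt_of_le (Nat.sub_lt (by omega) one_pos)
        (Nat.le_of_dvd hm (Nat.mem_divisors.1 hd).1)) hmn |>.trans_le le_rfl |> fun _ => by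
          have := Nat.le_of_dvd hm (Nat.mem_divisors.1 hd).1; omega,
        Nat.sub_add_cancel h1 ▸ (Nat.mem_divisors.1 hd).1⟩
    · intro a _; omega
    · intro d hd
      have h1 : 1 ≤ d := Nat.one_le_iff_ne_zero.2 (Nat.pos_of_mem_divisors hd).ne'
      omega
    · intro a _; rfl
  have hi : 0 < i.1 + 1 := Nat.succ_pos _
  have hgcd : 0 < Nat.gcd (i.1+1) (j.1+1) := Nat.gcd_pos_of_pos_left _ hi
  rw [sum_div (i.1+1) hi i.2, sum_div _ hgcd
    (le_trans (Nat.le_of_dvd hi (Nat.gcd_dvd_left _ _)) i.2)]
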